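/- For a connected weighted graph with stationary distribution π = D1 / (1^T D 1), the vector L^+ (1_u - π) equals (1/2) Π D^{-1} sum_{t=0}^∞ ( X^t 1_u - π ), where X = (1/2)I + (1/2) A D^{-1} is the lazy random walk matrix and Π = I - (1/n) 1 1^T, and the series converges. -/

import Mathlib

open Matrix BigOperators

private lemma quad_helper {n : ℕ} (A : Matrix (Fin n) (Fin n) ℝ) (hsym : A.IsSymm)
    (σ : ℝ) (hσ : σ * σ = 1) (z : Fin n → ℝ) :
    ∑ i, (∑ j, A i j) * z i ^ 2 + σ * ∑ i, ∑ j, A i j * z i * z j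
      = (1/2) * ∑ i, ∑ j, A i j * (z i + σ * z j) ^ 2 := by
  have hAij : ∀ i j, A j i = A i j := fun i j => by
    conv_lhs => rw [← hsym]
    rfl
  have h1 : ∑ i, ∑ j, A i j * (z i + σ * z j) ^ 2
      = ∑ i, ∑ j, (A i j * z i ^ 2 + A i j * z j ^ 2 + 2 * σ * (A i j * z i * z j)) := by
    refine Finset.sum_congr rfl fun i _ => Finset.sum_congr rfl fun j _ => ?_
    have : (z i + σ * z j)^2 = z i^2 + σ*σ*(z j^2) + 2*σ*(z i * z j) := by ring
    rw [mul_comm (A i j), this, hσ]; ring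
  have h2 : ∑ i, ∑ j, A i j * z j ^ 2 = ∑ i, (∑ j, A i j) * z i ^ 2 := by
    rw [Finset.sum_comm]
    refine Finset.sum_congr rfl fun i _ => ?_
    rw [Finset.sum_mul]
    exact Finset.sum_congr rfl fun j _ => by rw [hAij]
  have h3 : ∑ i, ∑ j, A i j * z i ^ 2 = ∑ i, (∑ j, A i j) * z i ^ 2 := by
    refine Finset.sum_congr rfl fun i _ => ?_
    rw [Finset.sum_mul]
  have h4 : ∑ i, ∑ j, (2 * σ * (A i j * z i * z j)) = 2 * σ * ∑ i, ∑ j, A i j * z i * z j := by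
    simp [Finset.mul_sum]
  calc ∑ i, (∑ j, A i j) * z i ^ 2 + σ * ∑ i, ∑ j, A i j * z i * z j
      = (1/2) * ((∑ i, (∑ j, A i j) * z i ^ 2) + (∑ i, (∑ j, A i j) * z i ^ 2)
          + 2 * σ * ∑ i, ∑ j, A i j * z i * z j) := by ring
    _ = (1/2) * ∑ i, ∑ j, A i j * (z i + σ * z j) ^ 2 := by
        rw [h1]
        simp only [Finset.sum_add_distrib]
        rw [h2, h3, h4]

theorem pseudoinverse_power_series (n : ℕ) (A : Matrix (Fin n) (Fin n) ℝ)
    (hsym : A.IsSymm) (hnonneg : ∀ i j, 0 ≤ A i j) (hloop : ∀ i, A i i = 0)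
    (hdpos : ∀ i, 0 < ∑ j, A i j)
    (L : Matrix (Fin n) (Fin n) ℝ)
    (hL : L = Matrix.diagonal (fun i => ∑ j, A i j) - A)
    (hker : ∀ x : Fin n → ℝ, L.mulVec x = 0 → ∃ c : ℝ, ∀ i, x i = c)
    (Lp : Matrix (Fin n) (Fin n) ℝ)
    (hmp1 : L * Lp * L = L) (hmp2 : Lp * L * Lp = Lp)
    (hmp3 : (L * Lp).IsSymm) (hmp4 : (Lp * L).IsSymm)
    (X : Matrix (Fin n) (Fin n) ℝ)
    (hX : X = (1 / 2 : ℝ) • (1 : Matrix (Fin n) (Fin n) ℝ)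
        + (1 / 2 : ℝ) • (A * Matrix.diagonal (fun i => (∑ j, A i j)⁻¹)))
    (pi : Fin n → ℝ) (hpi : pi = fun i => (∑ j, A i j) / ∑ i, ∑ j, A i j)
    (u : Fin n) :
    Summable (fun t : ℕ => (X ^ t).mulVec (Pi.single u 1) - pi) ∧
    Lp.mulVec (Pi.single u 1 - pi)
      = (1 / 2 : ℝ) •
          (((1 : Matrix (Fin n) (Fin n) ℝ)
              - ((n : ℝ)⁻¹) • Matrix.of (fun _ _ : Fin n => (1 : ℝ)))
            * Matrix.diagonal (fun i => (∑ j, A i j)⁻¹)).mulVec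
          (∑' t : ℕ, ((X ^ t).mulVec (Pi.single u 1) - pi)) := by
  classical
  have hn : 0 < n := u.pos
  set d : Fin n → ℝ := fun i => ∑ j, A i j with hd
  have hdpos' : ∀ i, 0 < d i := hdpos
  have hdne : ∀ i, d i ≠ 0 := fun i => (hdpos' i).ne'
  have hspos : 0 < ∑ i, ∑ j, A i j :=
    Finset.sum_pos (fun i _ => hdpos i) ⟨u, Finset.mem_univ u⟩
  set s : ℝ := ∑ i, ∑ j, A i j with hs
  have hsne : s ≠ 0 := hspos.ne'
  set e : Fin n → ℝ := fun i => Real.sqrt (d i) with he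
  have hepos : ∀ i, 0 < e i := fun i => Real.sqrt_pos.2 (hdpos' i)
  have hene : ∀ i, e i ≠ 0 := fun i => (hepos i).ne'
  have hee : ∀ i, e i * e i = d i := fun i => Real.mul_self_sqrt (hdpos' i).le
  set E : Matrix (Fin n) (Fin n) ℝ := Matrix.diagonal e with hE
  set Einv : Matrix (Fin n) (Fin n) ℝ := Matrix.diagonal (fun i => (e i)⁻¹) with hEinv
  set Dinv : Matrix (Fin n) (Fin n) ℝ := Matrix.diagonal (fun i => (d i)⁻¹) with hDinv
  have hDinv' : Matrix.diagonal (fun i => (∑ j, A i j)⁻¹) = Dinv := rfl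
  have hEEinv : E * Einv = 1 := by
    rw [hE, hEinv, diagonal_mul_diagonal, ← Matrix.diagonal_one]
    exact congrArg _ (funext fun i => mul_inv_cancel₀ (hene i))
  have hEinvE : Einv * E = 1 := by
    rw [hE, hEinv, diagonal_mul_diagonal, ← Matrix.diagonal_one]
    exact congrArg _ (funext fun i => inv_mul_cancel₀ (hene i))
  set B : Matrix (Fin n) (Fin n) ℝ := Einv * A * Einv with hB
  set S : Matrix (Fin n) (Fin n) ℝ := (1/2 : ℝ) • (1 + B) with hSdef
  have hEinv2 : Einv * Einv = Dinv := by
    rw [hEinv, hDinv, diagonal_mul_diagonal]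
    exact congrArg _ (funext fun i => by rw [← hee i, mul_inv])
  have hkey : E * B * Einv = A * Dinv := by
    rw [hB]
    calc E * (Einv * A * Einv) * Einv = (E * Einv) * (A * (Einv * Einv)) := by
          simp only [Matrix.mul_assoc]
      _ = A * Dinv := by rw [hEEinv, hEinv2, one_mul]
  have hXE : X = E * S * Einv := by
    rw [hSdef, Matrix.mul_smul, Matrix.smul_mul, mul_add, mul_one, add_mul, hEEinv, hkey,
      smul_add, hX]
  have hXt : ∀ t : ℕ, X ^ t = E * S ^ t * Einv := by
    intro t
    induction t with
    | zero => rw [pow_zero, pow_zero, mul_one, hEEinv]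
    | succ t ih =>
        rw [pow_succ, pow_succ, ih, hXE]
        calc (E * S ^ t * Einv) * (E * S * Einv)
            = E * (S ^ t * (Einv * E) * S) * Einv := by simp only [Matrix.mul_assoc]
          _ = E * (S ^ t * S) * Einv := by rw [hEinvE, mul_one]
  have hBsymm : B.IsSymm := by
    rw [hB, hEinv, Matrix.IsSymm, Matrix.transpose_mul, Matrix.transpose_mul,
      Matrix.diagonal_transpose, hsym.eq, Matrix.mul_assoc]
  have hSherm : S.IsHermitian := by
    rw [hSdef, Matrix.IsHermitian, conjTranspose_eq_transpose_of_trivial, Matrix.transpose_smul,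
      Matrix.transpose_add, Matrix.transpose_one, hBsymm.eq]
  have hBij : ∀ i j, B i j = (e i)⁻¹ * A i j * (e j)⁻¹ := by
    intro i j
    rw [hB, hEinv, Matrix.mul_diagonal, Matrix.diagonal_mul]
  have hquadB : ∀ x : Fin n → ℝ,
      x ⬝ᵥ (B *ᵥ x) = ∑ i, ∑ j, A i j * ((e i)⁻¹ * x i) * ((e j)⁻¹ * x j) := by
    intro x
    have : x ⬝ᵥ (B *ᵥ x) = ∑ i, ∑ j, x i * (B i j * x j) := by
      simp [dotProduct, mulVec, Finset.mul_sum]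
    rw [this]
    refine Finset.sum_congr rfl fun i _ => Finset.sum_congr rfl fun j _ => ?_
    rw [hBij]; ring
  have hxx : ∀ x : Fin n → ℝ, x ⬝ᵥ x = ∑ i, d i * ((e i)⁻¹ * x i) ^ 2 := by
    intro x
    simp only [dotProduct]
    refine Finset.sum_congr rfl fun i _ => ?_
    rw [← hee i]
    have h := hene i
    field_simp
  have hquad : ∀ (σ : ℝ), σ * σ = 1 → ∀ x : Fin n → ℝ,
      x ⬝ᵥ x + σ * (x ⬝ᵥ (B *ᵥ x))
        = (1/2) * ∑ i, ∑ j, A i j * ((e i)⁻¹ * x i + σ * ((e j)⁻¹ * x j)) ^ 2 := by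
    intro σ hσ x
    rw [hxx x, hquadB x]
    exact quad_helper A hsym σ hσ (fun i => (e i)⁻¹ * x i)
  have hquadpos : ∀ (σ : ℝ) (x : Fin n → ℝ),
      0 ≤ (1/2 : ℝ) * ∑ i, ∑ j, A i j * ((e i)⁻¹ * x i + σ * ((e j)⁻¹ * x j)) ^ 2 := by
    intro σ x
    refine mul_nonneg (by norm_num) ?_
    refine Finset.sum_nonneg fun i _ => Finset.sum_nonneg fun j _ =>
      mul_nonneg (hnonneg i j) (sq_nonneg _)
  have hSpsd : S.PosSemidef := by
    refine Matrix.PosSemidef.of_dotProduct_mulVec_nonneg hSherm fun x => ?_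
    have hx : star x = x := by simp
    rw [hx, hSdef, Matrix.smul_mulVec, Matrix.add_mulVec, Matrix.one_mulVec,
      dotProduct_smul, dotProduct_add]
    have := hquad 1 (by norm_num) x
    rw [one_mul] at this
    rw [smul_eq_mul]
    have h2 : 0 ≤ x ⬝ᵥ x + x ⬝ᵥ (B *ᵥ x) := by
      rw [this]; exact hquadpos 1 x
    linarith
  have hISeq : (1 : Matrix (Fin n) (Fin n) ℝ) - S = (1/2 : ℝ) • (1 - B) := by
    rw [hSdef]; module
  have hISpsd : ((1 : Matrix (Fin n) (Fin n) ℝ) - S).PosSemidef := by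
    refine Matrix.PosSemidef.of_dotProduct_mulVec_nonneg (Matrix.isHermitian_one.sub hSherm) fun x => ?_
    have hx : star x = x := by simp
    rw [hx, hISeq, Matrix.smul_mulVec, Matrix.sub_mulVec, Matrix.one_mulVec,
      dotProduct_smul, dotProduct_sub]
    have := hquad (-1) (by norm_num) x
    rw [smul_eq_mul]
    have h2 : 0 ≤ x ⬝ᵥ x + (-1) * (x ⬝ᵥ (B *ᵥ x)) := by
      rw [this]; exact hquadpos (-1) x
    linarith
  set U : Matrix (Fin n) (Fin n) ℝ := (hSherm.eigenvectorUnitary : Matrix (Fin n) (Fin n) ℝ)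
    with hU
  set lam : Fin n → ℝ := hSherm.eigenvalues with hlam
  have hUstar : star U * U = 1 := Matrix.mem_unitaryGroup_iff'.mp hSherm.eigenvectorUnitary.2
  have hUU : U * star U = 1 := Matrix.mem_unitaryGroup_iff.mp hSherm.eigenvectorUnitary.2
  have hspec : S = U * Matrix.diagonal lam * star U := by
    have h := hSherm.spectral_theorem
    simpa using h
  have hSt : ∀ t : ℕ, S ^ t = U * Matrix.diagonal (fun i => lam i ^ t) * star U := by
    intro t
    induction t with
    | zero =>
        rw [pow_zero]
        have h1 : Matrix.diagonal (fun i : Fin n => lam i ^ 0) = 1 := by simp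
        rw [h1, mul_one, hUU]
    | succ t ih =>
        rw [pow_succ, ih, hspec]
        calc (U * Matrix.diagonal (fun i => lam i ^ t) * star U) * (U * Matrix.diagonal lam * star U)
            = U * (Matrix.diagonal (fun i => lam i ^ t) * (star U * U) * Matrix.diagonal lam) * star U := by
              simp only [Matrix.mul_assoc]
          _ = U * Matrix.diagonal (fun i => lam i ^ (t+1)) * star U := by
              rw [hUstar, mul_one, diagonal_mul_diagonal]
              congr 1
  have hlam0 : ∀ i, 0 ≤ lam i := fun i => hSpsd.eigenvalues_nonneg i
  have hucol : ∀ i, S *ᵥ (fun j => U j i) = lam i • (fun j => U j i) := fun i =>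
    hSherm.mulVec_eigenvectorBasis i
  have hunorm : ∀ i, (fun j => U j i) ⬝ᵥ (fun j => U j i) = 1 := by
    intro i
    have h : (star U * U) i i = (1 : Matrix (Fin n) (Fin n) ℝ) i i := by rw [hUstar]
    rw [Matrix.mul_apply, Matrix.one_apply_eq] at h
    simpa [dotProduct, Matrix.star_apply] using h
  have hlam1 : ∀ i, lam i ≤ 1 := by
    intro i
    have h := hISpsd.dotProduct_mulVec_nonneg (fun j => U j i)
    have hx : star (fun j => U j i) = (fun j => U j i) := by simp
    rw [hx, Matrix.sub_mulVec, Matrix.one_mulVec, hucol i, dotProduct_sub, dotProduct_smul,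
      hunorm i, smul_eq_mul, mul_one] at h
    linarith
  have hIS : (1 : Matrix (Fin n) (Fin n) ℝ) - S = (1/2 : ℝ) • (Einv * L * Einv) := by
    have hELE : Einv * L * Einv = 1 - B := by
      rw [hL, mul_sub, sub_mul, hB]
      congr 1
      rw [hEinv, diagonal_mul_diagonal, diagonal_mul_diagonal, ← Matrix.diagonal_one]
      refine congrArg _ (funext fun i => ?_)
      rw [← hee i]
      have h := hene i
      field_simp
    rw [hELE, hISeq]
  set w : Fin n → ℝ := Pi.single u 1 - pi with hw
  have hpisum : ∑ i, pi i = 1 := by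
    rw [hpi, ← Finset.sum_div]
    exact div_self hsne
  have hwsum : ∑ i, w i = 0 := by
    rw [hw]
    simp only [Pi.sub_apply, Finset.sum_sub_distrib, hpisum]
    simp [Pi.single_apply]
  have hDinvpi : Dinv *ᵥ pi = fun _ => s⁻¹ := by
    funext i
    rw [hDinv]
    simp only [mulVec_diagonal]
    rw [hpi]
    have := hdne i
    field_simp
    rfl
  have hApis : A *ᵥ (fun _ => s⁻¹) = pi := by
    funext i
    simp only [mulVec, dotProduct]
    rw [hpi, ← Finset.sum_mul]
    simp [div_eq_mul_inv]
  have hXpi : X *ᵥ pi = pi := by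
    rw [hX]
    rw [Matrix.add_mulVec, Matrix.smul_mulVec, Matrix.smul_mulVec, Matrix.one_mulVec,
      ← Matrix.mulVec_mulVec, hDinvpi, hApis]
    funext i
    simp only [Pi.add_apply, Pi.smul_apply, smul_eq_mul]
    ring
  have hXtpi : ∀ t : ℕ, (X ^ t) *ᵥ pi = pi := by
    intro t
    induction t with
    | zero => rw [pow_zero, Matrix.one_mulVec]
    | succ t ih => rw [pow_succ, ← Matrix.mulVec_mulVec, hXpi, ih]
  set z : Fin n → ℝ := star U *ᵥ (Einv *ᵥ w) with hz
  have heig : ∀ i, lam i = 1 → z i = 0 := by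
    intro i hl
    have h1 : ((1 : Matrix (Fin n) (Fin n) ℝ) - S) *ᵥ (fun j => U j i) = 0 := by
      rw [Matrix.sub_mulVec, Matrix.one_mulVec, hucol i, hl, one_smul, sub_self]
    rw [hIS] at h1
    have h2 : (Einv * L * Einv) *ᵥ (fun j => U j i) = 0 := by
      have h2' := congrArg (fun v => (2:ℝ) • v) h1
      simpa [Matrix.smul_mulVec, smul_smul] using h2'
    have h3 : L *ᵥ (Einv *ᵥ (fun j => U j i)) = 0 := by
      have h4 : (E * (Einv * L * Einv)) *ᵥ (fun j => U j i) = 0 := by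
        rw [← Matrix.mulVec_mulVec, h2, Matrix.mulVec_zero]
      have h5 : E * (Einv * L * Einv) = L * Einv := by
        calc E * (Einv * L * Einv) = (E * Einv) * (L * Einv) := by simp only [Matrix.mul_assoc]
          _ = L * Einv := by rw [hEEinv, one_mul]
      rw [h5, ← Matrix.mulVec_mulVec] at h4
      exact h4
    obtain ⟨c, hc⟩ := hker _ h3
    have hcol : ∀ j, (e j)⁻¹ * U j i = c := by
      intro j
      have hcj := hc j
      rwa [hEinv, mulVec_diagonal] at hcj
    have hci : ∀ j, U j i = c * e j := by
      intro j
      rw [← hcol j]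
      have hej := hene j
      field_simp
    rw [hz]
    have hEw : Einv *ᵥ w = fun j => (e j)⁻¹ * w j := by
      funext j; rw [hEinv, mulVec_diagonal]
    rw [hEw]
    simp only [mulVec, dotProduct, Matrix.star_apply, star_trivial]
    calc ∑ j, U j i * ((e j)⁻¹ * w j) = ∑ j, c * w j := by
          refine Finset.sum_congr rfl fun j _ => ?_
          rw [hci j]
          have hej := hene j
          field_simp
      _ = 0 := by rw [← Finset.mul_sum, hwsum, mul_zero]
  have hv : ∀ t : ℕ, (X ^ t) *ᵥ (Pi.single u 1) - pi
      = (E * U) *ᵥ (fun i => lam i ^ t * z i) := by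
    intro t
    have h1 : (X ^ t) *ᵥ (Pi.single u 1) - pi = (X ^ t) *ᵥ w := by
      rw [hw, Matrix.mulVec_sub, hXtpi t]
    rw [h1, hXt t, hSt t]
    calc (E * (U * Matrix.diagonal (fun i => lam i ^ t) * star U) * Einv) *ᵥ w
        = (E * U) *ᵥ (Matrix.diagonal (fun i => lam i ^ t) *ᵥ (star U *ᵥ (Einv *ᵥ w))) := by
          simp only [Matrix.mulVec_mulVec, Matrix.mul_assoc]
      _ = (E * U) *ᵥ (fun i => lam i ^ t * z i) := by
          have hdz : (Matrix.diagonal fun i => lam i ^ t) *ᵥ (star U *ᵥ (Einv *ᵥ w))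
              = fun i => lam i ^ t * z i := by
            funext i
            rw [mulVec_diagonal]
          rw [hdz]
  have hgsum : Summable (fun t : ℕ => (fun i => lam i ^ t * z i) : ℕ → Fin n → ℝ) := by
    rw [Pi.summable]
    intro i
    by_cases hzi : z i = 0
    · simpa [hzi] using summable_zero
    · have hlt : lam i < 1 := lt_of_le_of_ne (hlam1 i) (fun h => hzi (heig i h))
      exact (summable_geometric_of_lt_one (hlam0 i) hlt).mul_right (z i)
  have hsum : Summable (fun t : ℕ => (X ^ t).mulVec (Pi.single u 1) - pi) := by
    have hφ : Continuous ((E * U).mulVecLin) := LinearMap.continuous_of_finiteDimensional _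
    have hmap := hgsum.map ((E * U).mulVecLin) hφ
    refine hmap.congr fun t => ?_
    rw [Function.comp_apply, Matrix.mulVecLin_apply, ← hv t]
  refine ⟨hsum, ?_⟩
  set T : Fin n → ℝ := ∑' t : ℕ, ((X ^ t).mulVec (Pi.single u 1) - pi) with hT
  have hvt : ∀ t : ℕ, X *ᵥ ((X ^ t) *ᵥ (Pi.single u 1) - pi)
      = (X ^ (t+1)) *ᵥ (Pi.single u 1) - pi := by
    intro t
    rw [Matrix.mulVec_sub, Matrix.mulVec_mulVec, ← pow_succ', hXpi]
  have hf0 : (X ^ 0) *ᵥ (Pi.single u 1) - pi = w := by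
    rw [pow_zero, Matrix.one_mulVec, hw]
  have hXT : X *ᵥ T = T - w := by
    have hmap : X *ᵥ T = ∑' t : ℕ, X *ᵥ ((X ^ t) *ᵥ (Pi.single u 1) - pi) := by
      rw [hT]
      exact (LinearMap.toContinuousLinearMap X.mulVecLin).map_tsum hsum
    rw [hmap, tsum_congr hvt]
    have h3 := hsum.tsum_eq_zero_add
    rw [hf0, ← hT] at h3
    exact eq_sub_of_add_eq' h3.symm
  have h1XT : T - X *ᵥ T = w := by rw [hXT, sub_sub_cancel]
  have hDDinv : Matrix.diagonal d * Dinv = 1 := by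
    rw [hDinv, diagonal_mul_diagonal, ← Matrix.diagonal_one]
    exact congrArg _ (funext fun i => mul_inv_cancel₀ (hdne i))
  have h1X : (1 : Matrix (Fin n) (Fin n) ℝ) - X = (1/2 : ℝ) • (L * Dinv) := by
    rw [hX, hL, Matrix.sub_mul, hDDinv]
    module
  have hLw : L *ᵥ ((1/2 : ℝ) • (Dinv *ᵥ T)) = w := by
    rw [Matrix.mulVec_smul, Matrix.mulVec_mulVec, ← Matrix.smul_mulVec, ← h1X,
      Matrix.sub_mulVec, Matrix.one_mulVec]
    exact h1XT
  have hL1 : L *ᵥ (fun _ => (1:ℝ)) = 0 := by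
    funext i
    rw [hL]
    simp [mulVec, dotProduct, Matrix.sub_apply, Matrix.diagonal_apply,
      Finset.sum_sub_distrib, Finset.sum_ite_eq]
    exact sub_self _
  have hncast : (n : ℝ) ≠ 0 := Nat.cast_ne_zero.mpr hn.ne'
  have hP : ∀ x : Fin n → ℝ,
      (Lp * L) *ᵥ x = x - ((∑ i, x i) / n) • (fun _ => (1:ℝ)) := by
    intro x
    have hLP : L * (Lp * L) = L := by rw [← Matrix.mul_assoc, hmp1]
    have h0 : L *ᵥ ((Lp * L) *ᵥ x - x) = 0 := by
      rw [Matrix.mulVec_sub, Matrix.mulVec_mulVec, hLP, sub_self]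
    obtain ⟨c, hc⟩ := hker _ h0
    have hP1 : (Lp * L) *ᵥ (fun _ => (1:ℝ)) = 0 := by
      rw [← Matrix.mulVec_mulVec, hL1, Matrix.mulVec_zero]
    have hsum0 : ∑ i, ((Lp * L) *ᵥ x) i = 0 := by
      have hdot : (fun _ => (1:ℝ)) ⬝ᵥ ((Lp * L) *ᵥ x)
          = ((fun _ => (1:ℝ)) ᵥ* (Lp * L)) ⬝ᵥ x := Matrix.dotProduct_mulVec _ _ _
      have h1v : (fun _ => (1:ℝ)) ᵥ* (Lp * L) = (0 : Fin n → ℝ) := by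
        rw [← Matrix.mulVec_transpose, hmp4.eq, hP1]
      rw [h1v, zero_dotProduct] at hdot
      simpa [dotProduct] using hdot
    have hcsum : ∑ i, (((Lp * L) *ᵥ x) i - x i) = (n : ℝ) * c := by
      rw [Finset.sum_congr rfl fun i _ => (congrFun ((rfl : ((Lp * L) *ᵥ x - x) = _)) i ▸ hc i)]
      simp [Finset.sum_const, mul_comm]
    rw [Finset.sum_sub_distrib, hsum0, zero_sub] at hcsum
    have hceq : c = -((∑ i, x i) / n) := by
      field_simp at hcsum ⊢
      linarith
    funext i
    have hci := hc i
    rw [Pi.sub_apply] at hci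
    rw [Pi.sub_apply, Pi.smul_apply, smul_eq_mul, mul_one]
    rw [hceq] at hci
    linarith
  -- final computation
  have hq : Lp *ᵥ w = (Lp * L) *ᵥ ((1/2 : ℝ) • (Dinv *ᵥ T)) := by
    rw [← Matrix.mulVec_mulVec, hLw]
  have hJ : (Matrix.of (fun _ _ : Fin n => (1:ℝ))) *ᵥ (Dinv *ᵥ T)
      = fun _ => ∑ i, (Dinv *ᵥ T) i := by
    funext i
    simp [mulVec, dotProduct]
  show Lp *ᵥ w = _
  rw [hq, hP]
  rw [← Matrix.mulVec_mulVec, Matrix.sub_mulVec, Matrix.one_mulVec, Matrix.smul_mulVec, hJ]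
  funext i
  simp only [Pi.sub_apply, Pi.smul_apply, smul_eq_mul, mul_one]
  rw [← Finset.mul_sum]
  field_simp
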